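/- Let G ⊆ ℂ×ℂ be open, let Φ₁, Φ₂ : ℂ×ℂ → ℂ be ℂ-differentiable on G and satisfy the bicomplex Cauchy–Riemann equations on G, and set ψ(p) = (∂Φ₁/∂a (p), ∂Φ₂/∂a (p)) (the bicomplex derivative of Ψ = (Φ₁,Φ₂)). Then for every continuously differentiable curve p : [r,s] → G one has ∫_r^s ψ(p(t)) ⊙ p′(t) dt = Ψ(p(s)) − Ψ(p(r)); in particular the bicomplex line integral of ψ depends only on the end points of the curve, and vanishes over every closed curve. -/

import Mathlib

open Metric MeasureTheory Set

/-- Bicomplex multiplication on ℂ × ℂ. -/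
def bmul (p q : ℂ × ℂ) : ℂ × ℂ := (p.1 * q.1 - p.2 * q.2, p.2 * q.1 + p.1 * q.2)

lemma continuous_bmul : Continuous (fun q : (ℂ × ℂ) × (ℂ × ℂ) => bmul q.1 q.2) := by
  unfold bmul; fun_prop

lemma norm_bmul_le (u w : ℂ × ℂ) : ‖bmul u w‖ ≤ 2 * ‖u‖ * ‖w‖ := by
  have h1 : ‖u.1‖ ≤ ‖u‖ := norm_fst_le u
  have h2 : ‖u.2‖ ≤ ‖u‖ := norm_snd_le u
  have h3 : ‖w.1‖ ≤ ‖w‖ := norm_fst_le w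
  have h4 : ‖w.2‖ ≤ ‖w‖ := norm_snd_le w
  have e1 : ‖u.1 * w.1 - u.2 * w.2‖ ≤ 2 * ‖u‖ * ‖w‖ := by
    calc ‖u.1 * w.1 - u.2 * w.2‖ ≤ ‖u.1 * w.1‖ + ‖u.2 * w.2‖ := norm_sub_le _ _
      _ = ‖u.1‖ * ‖w.1‖ + ‖u.2‖ * ‖w.2‖ := by rw [norm_mul, norm_mul]
      _ ≤ ‖u‖ * ‖w‖ + ‖u‖ * ‖w‖ := by gcongr
      _ = 2 * ‖u‖ * ‖w‖ := by ring
  have e2 : ‖u.2 * w.1 + u.1 * w.2‖ ≤ 2 * ‖u‖ * ‖w‖ := by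
    calc ‖u.2 * w.1 + u.1 * w.2‖ ≤ ‖u.2 * w.1‖ + ‖u.1 * w.2‖ := norm_add_le _ _
      _ = ‖u.2‖ * ‖w.1‖ + ‖u.1‖ * ‖w.2‖ := by rw [norm_mul, norm_mul]
      _ ≤ ‖u‖ * ‖w‖ + ‖u‖ * ‖w‖ := by gcongr
      _ = 2 * ‖u‖ * ‖w‖ := by ring
  rw [bmul, Prod.norm_def]
  exact max_le e1 e2

/-- A Cauchy-estimate style local bound for directional derivatives of a
complex-differentiable function on an open set. -/
lemma fderiv_locally_bounded {Φ : ℂ × ℂ → ℂ} {U : Set (ℂ × ℂ)} (hU : IsOpen U)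
    (hd : ∀ q ∈ U, DifferentiableAt ℂ Φ q) (v : ℂ × ℂ) (hv : ‖v‖ ≤ 1)
    {q₀ : ℂ × ℂ} (hq : q₀ ∈ U) :
    ∃ ε > 0, ∃ C, ∀ q' ∈ ball q₀ ε, ‖fderiv ℂ Φ q' v‖ ≤ C := by
  obtain ⟨δ, hδ, hδU⟩ := Metric.isOpen_iff.mp hU q₀ hq
  set ε := δ / 3 with hεd
  have hε : 0 < ε := by positivity
  have hsub : closedBall q₀ (2 * ε) ⊆ U := by
    refine (closedBall_subset_ball ?_).trans hδU
    rw [hεd]; linarith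
  have hcompact : IsCompact (closedBall q₀ (2 * ε)) := isCompact_closedBall _ _
  have hcontΦ : ContinuousOn Φ (closedBall q₀ (2 * ε)) := fun x hx =>
    (hd x (hsub hx)).continuousAt.continuousWithinAt
  obtain ⟨C, hC⟩ := hcompact.exists_bound_of_continuousOn hcontΦ
  refine ⟨ε, hε, C / ε, fun q' hq' => ?_⟩
  have hq'mem : ∀ z : ℂ, ‖z‖ ≤ ε → q' + z • v ∈ closedBall q₀ (2 * ε) := by
    intro z hz
    have h1 : dist (q' + z • v) q' = ‖z • v‖ := by
      rw [dist_eq_norm]; ring_nf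
    have h2 : ‖z • v‖ ≤ ε := by
      rw [norm_smul]
      calc ‖z‖ * ‖v‖ ≤ ε * 1 := by
            apply mul_le_mul hz hv (norm_nonneg _) hε.le
        _ = ε := mul_one ε
    have := dist_triangle (q' + z • v) q' q₀
    rw [mem_closedBall]
    rw [mem_ball] at hq'
    calc dist (q' + z • v) q₀ ≤ dist (q' + z • v) q' + dist q' q₀ := this
      _ ≤ ε + ε := by rw [h1]; exact add_le_add h2 hq'.le
      _ = 2 * ε := by ring
  set f : ℂ → ℂ := fun z => Φ (q' + z • v) with hf
  have hlin : ∀ z : ℂ, HasDerivAt (fun w : ℂ => q' + w • v) v z := by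
    intro z
    simpa using ((hasDerivAt_id z).smul_const v).const_add q'
  have hdf : ∀ z ∈ closedBall (0 : ℂ) ε, DifferentiableAt ℂ f z := by
    intro z hz
    have hzε : ‖z‖ ≤ ε := by simpa [mem_closedBall, dist_eq_norm] using hz
    exact (hd _ (hsub (hq'mem z hzε))).comp z (hlin z).differentiableAt
  have hdcc : DiffContOnCl ℂ f (ball (0 : ℂ) ε) := by
    apply DifferentiableOn.diffContOnCl
    rw [closure_ball (0 : ℂ) hε.ne']
    exact fun z hz => (hdf z hz).differentiableWithinAt
  have hsph : ∀ z ∈ sphere (0 : ℂ) ε, ‖f z‖ ≤ C := by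
    intro z hz
    have hzε : ‖z‖ = ε := by simpa [mem_sphere, dist_eq_norm] using hz
    exact hC _ (hq'mem z hzε.le)
  have hbound := Complex.norm_deriv_le_of_forall_mem_sphere_norm_le hε hdcc hsph
  have hq'U : q' ∈ U := hδU (ball_subset_ball (by linarith) hq')
  have hΦd : HasFDerivAt Φ (fderiv ℂ Φ q') (q' + (0 : ℂ) • v) := by
    simpa using (hd q' hq'U).hasFDerivAt
  have hder : HasDerivAt f (fderiv ℂ Φ q' v) 0 := hΦd.comp_hasDerivAt (0 : ℂ) (hlin 0)
  rwa [hder.deriv] at hbound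

theorem bicomplex_line_integral_of_derivative (G : Set (ℂ × ℂ)) (hG : IsOpen G)
    (Φ₁ Φ₂ : ℂ × ℂ → ℂ)
    (hd₁ : ∀ q ∈ G, DifferentiableAt ℂ Φ₁ q)
    (hd₂ : ∀ q ∈ G, DifferentiableAt ℂ Φ₂ q)
    (hcr₁ : ∀ q ∈ G, fderiv ℂ Φ₁ q (1, 0) = fderiv ℂ Φ₂ q (0, 1))
    (hcr₂ : ∀ q ∈ G, fderiv ℂ Φ₂ q (1, 0) = -fderiv ℂ Φ₁ q (0, 1))
    (ψ : ℂ × ℂ → ℂ × ℂ)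
    (hψ : ∀ q, ψ q = (fderiv ℂ Φ₁ q (1, 0), fderiv ℂ Φ₂ q (1, 0)))
    (r s : ℝ) (hrs : r ≤ s) (p p' : ℝ → ℂ × ℂ)
    (hmem : ∀ t ∈ Set.Icc r s, p t ∈ G)
    (hderiv : ∀ t ∈ Set.Icc r s, HasDerivAt p (p' t) t)
    (hcont : ContinuousOn p' (Set.Icc r s)) :
    ∫ t in r..s, bmul (ψ (p t)) (p' t) =
      (Φ₁ (p s), Φ₂ (p s)) - (Φ₁ (p r), Φ₂ (p r)) := by
  -- measurability of ψ
  have hψmeas : Measurable ψ := by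
    have h1 : Measurable fun q => fderiv ℂ Φ₁ q (1, 0) :=
      measurable_fderiv_apply_const ℂ Φ₁ (1, 0)
    have h2 : Measurable fun q => fderiv ℂ Φ₂ q (1, 0) :=
      measurable_fderiv_apply_const ℂ Φ₂ (1, 0)
    have : ψ = fun q => (fderiv ℂ Φ₁ q (1, 0), fderiv ℂ Φ₂ q (1, 0)) := funext hψ
    rw [this]
    exact h1.prodMk h2
  -- continuity of p on [r, s]
  have hpc : ContinuousOn p (Set.Icc r s) := fun t ht =>
    (hderiv t ht).continuousAt.continuousWithinAt
  -- the derivative statement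
  have key : ∀ t ∈ Set.Icc r s,
      HasDerivAt (fun u => (Φ₁ (p u), Φ₂ (p u))) (bmul (ψ (p t)) (p' t)) t := by
    intro t ht
    have hq : p t ∈ G := hmem t ht
    have h1 := ((hd₁ (p t) hq).hasFDerivAt.restrictScalars ℝ).comp_hasDerivAt t (hderiv t ht)
    have h2 := ((hd₂ (p t) hq).hasFDerivAt.restrictScalars ℝ).comp_hasDerivAt t (hderiv t ht)
    have hsplit : ∀ L : (ℂ × ℂ) →L[ℂ] ℂ,
        L (p' t) = (p' t).1 * L (1, 0) + (p' t).2 * L (0, 1) := by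
      intro L
      calc L (p' t) = L ((p' t).1 • ((1 : ℂ), (0 : ℂ)) + (p' t).2 • ((0 : ℂ), (1 : ℂ))) := by
            congr 1
            ext <;> simp
        _ = (p' t).1 * L (1, 0) + (p' t).2 * L (0, 1) := by
            rw [map_add, L.map_smul, L.map_smul, smul_eq_mul, smul_eq_mul]
    have e1 : fderiv ℂ Φ₁ (p t) (p' t)
        = (ψ (p t)).1 * (p' t).1 - (ψ (p t)).2 * (p' t).2 := by
      rw [hsplit (fderiv ℂ Φ₁ (p t)), hψ]
      have h := hcr₂ (p t) hq
      simp only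
      linear_combination (p' t).2 * h
    have e2 : fderiv ℂ Φ₂ (p t) (p' t)
        = (ψ (p t)).2 * (p' t).1 + (ψ (p t)).1 * (p' t).2 := by
      rw [hsplit (fderiv ℂ Φ₂ (p t)), hψ]
      have h := hcr₁ (p t) hq
      simp only
      linear_combination (p' t).2 * h.symm
    have : bmul (ψ (p t)) (p' t)
        = (fderiv ℂ Φ₁ (p t) (p' t), fderiv ℂ Φ₂ (p t) (p' t)) := by
      rw [bmul, e1, e2]
    rw [this]
    exact h1.prodMk h2
  -- integrability
  have hint : IntervalIntegrable (fun t => bmul (ψ (p t)) (p' t)) volume r s := by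
    rw [intervalIntegrable_iff_integrableOn_Icc_of_le hrs]
    apply MeasureTheory.LocallyIntegrableOn.integrableOn_isCompact _ isCompact_Icc
    intro x hx
    -- local bound for ψ near p x
    obtain ⟨ε₁, hε₁, C₁, hC₁⟩ :=
      fderiv_locally_bounded hG hd₁ ((1 : ℂ), (0 : ℂ)) (by rw [Prod.norm_def]; simp)
        (hmem x hx)
    obtain ⟨ε₂, hε₂, C₂, hC₂⟩ :=
      fderiv_locally_bounded hG hd₂ ((1 : ℂ), (0 : ℂ)) (by rw [Prod.norm_def]; simp)
        (hmem x hx)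
    set ε := min ε₁ ε₂ with hεd
    have hε : 0 < ε := lt_min hε₁ hε₂
    set Cψ := max C₁ C₂ with hCd
    have hψbound : ∀ q' ∈ ball (p x) ε, ‖ψ q'‖ ≤ Cψ := by
      intro q' hq'
      rw [hψ, Prod.norm_def]
      exact max_le_max (hC₁ q' (ball_subset_ball (min_le_left _ _) hq'))
        (hC₂ q' (ball_subset_ball (min_le_right _ _) hq'))
    -- find δ so that on Icc ∩ [x ± δ] both p lands in the ball and p' is bounded
    obtain ⟨δ₁, hδ₁, hp₁⟩ := Metric.continuousAt_iff.mp (hderiv x hx).continuousAt ε hε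
    obtain ⟨δ₂, hδ₂, hp₂⟩ := Metric.continuousWithinAt_iff.mp (hcont x hx) 1 one_pos
    set δ := min δ₁ δ₂ with hδd
    have hδ : 0 < δ := lt_min hδ₁ hδ₂
    set S := Set.Icc r s ∩ closedBall x (δ / 2) with hSd
    have hSmeas : MeasurableSet S := measurableSet_Icc.inter measurableSet_closedBall
    refine ⟨S, ?_, ?_⟩
    · exact Filter.inter_mem self_mem_nhdsWithin
        (mem_nhdsWithin_of_mem_nhds (closedBall_mem_nhds x (by positivity)))
    · have hSfin : volume S < ⊤ :=
        lt_of_le_of_lt (measure_mono Set.inter_subset_right) (measure_closedBall_lt_top)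
      have hbd : ∀ t ∈ S, ‖bmul (ψ (p t)) (p' t)‖ ≤ 2 * Cψ * (‖p' x‖ + 1) := by
        intro t htS
        obtain ⟨htI, htB⟩ := htS
        have hdist : dist t x < δ := lt_of_le_of_lt (mem_closedBall.mp htB) (by linarith)
        have hψt : ‖ψ (p t)‖ ≤ Cψ :=
          hψbound (p t) (hp₁ (lt_of_lt_of_le hdist (min_le_left _ _)))
        have hp't : ‖p' t‖ ≤ ‖p' x‖ + 1 := by
          have := hp₂ htI (lt_of_lt_of_le hdist (min_le_right _ _))
          have := norm_le_norm_add_norm_sub' (p' t) (p' x)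
          rw [dist_eq_norm] at *
          calc ‖p' t‖ ≤ ‖p' x‖ + ‖p' t - p' x‖ := norm_le_norm_add_norm_sub' _ _
            _ ≤ ‖p' x‖ + 1 := by
                have h := hp₂ htI (lt_of_lt_of_le hdist (min_le_right _ _))
                rw [dist_eq_norm] at h
                linarith
        have hψ0 : (0 : ℝ) ≤ Cψ :=
          le_trans (norm_nonneg _) (hψbound (p x) (mem_ball_self hε))
        calc ‖bmul (ψ (p t)) (p' t)‖ ≤ 2 * ‖ψ (p t)‖ * ‖p' t‖ := norm_bmul_le _ _
          _ ≤ 2 * Cψ * (‖p' x‖ + 1) := by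
              apply mul_le_mul _ hp't (norm_nonneg _) (by positivity)
              linarith
      have hmeasg : AEStronglyMeasurable (fun t => bmul (ψ (p t)) (p' t))
          (volume.restrict S) := by
        have hpm : AEMeasurable p (volume.restrict S) :=
          (hpc.mono Set.inter_subset_left).aemeasurable hSmeas
        have hp'm : AEMeasurable p' (volume.restrict S) :=
          ((hcont.mono Set.inter_subset_left).aemeasurable hSmeas)
        have hpair : AEMeasurable (fun t => (ψ (p t), p' t)) (volume.restrict S) :=
          (hψmeas.comp_aemeasurable hpm).prodMk hp'm
        exact (continuous_bmul.measurable.comp_aemeasurable hpair).aestronglyMeasurable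
      exact ⟨hmeasg, HasFiniteIntegral.restrict_of_bounded _ hSfin
        (ae_restrict_of_forall_mem hSmeas hbd)⟩
  have := intervalIntegral.integral_eq_sub_of_hasDerivAt
    (f := fun u => (Φ₁ (p u), Φ₂ (p u))) (f' := fun t => bmul (ψ (p t)) (p' t))
    (by rw [Set.uIcc_of_le hrs]; exact key) hint
  simpa using this
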